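/- arXiv:1310.1016 — 6 statements merged into one kernel-verified Lean document; each statement's English description precedes it below -/
import Mathlib

section
/- Let L be a relational first-order language, A an L-structure, and ι a nonempty type. Then every positive Horn sentence true in A is true in the power structure A^ι. -/
open FirstOrder Language

/-- Positive Horn bounded formulas over a relational language: built from atomic
formulas `R(v₁,…,vₙ)` (relation symbols applied to variables, no equality) using
only conjunction, existential quantification, and universal quantification. -/
inductive IsPH (L : FirstOrder.Language) : ∀ {n : ℕ}, L.BoundedFormula Empty n → Prop
  | rel {n l : ℕ} (R : L.Relations l) (v : Fin l → Fin n) :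
      IsPH L (BoundedFormula.rel R fun i => Term.var (Sum.inr (v i)))
  | inf {n : ℕ} {φ ψ : L.BoundedFormula Empty n} :
      IsPH L φ → IsPH L ψ → IsPH L (φ ⊓ ψ)
  | ex {n : ℕ} {φ : L.BoundedFormula Empty (n + 1)} : IsPH L φ → IsPH L φ.ex
  | all {n : ℕ} {φ : L.BoundedFormula Empty (n + 1)} : IsPH L φ → IsPH L φ.all

/-- The power structure `A^ι`: domain `ι → A`, relations holding componentwise. -/
def powStruct (L : FirstOrder.Language) (ι : Type*) (A : Type*) [L.Structure A] :
    L.Structure (ι → A) where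
  funMap := fun f x i => Structure.funMap f fun j => x j i
  RelMap := fun R x => ∀ i : ι, Structure.RelMap R fun j => x j i

/-- `φ` is true in the `L`-structure on `M` given by `S`. -/
def RealizeIn (L : FirstOrder.Language) (M : Type*) (S : L.Structure M)
    (φ : L.Sentence) : Prop :=
  @FirstOrder.Language.Sentence.Realize L M S φ

lemma snoc_comp {A ι : Type*} {n : ℕ} (xs : Fin n → (ι → A)) (f : ι → A) (i : ι) :
    (fun j => (Fin.snoc xs f : Fin (n+1) → ι → A) j i) = Fin.snoc (fun j => xs j i) (f i) := by
  funext j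
  refine Fin.lastCases ?_ ?_ j <;> simp [Fin.snoc_castSucc]

lemma key {L : FirstOrder.Language} {A : Type*} [L.Structure A] (ι : Type*) :
    ∀ {n} {φ : L.BoundedFormula Empty n}, IsPH L φ → ∀ (xs : Fin n → (ι → A)),
      (∀ i : ι, φ.Realize (fun e => Empty.elim e) (fun j => xs j i)) →
      @BoundedFormula.Realize L _ (powStruct L ι A) _ _ φ (fun e => Empty.elim e) xs := by
  intro n φ h
  induction h with
  | rel R v =>
      intro xs hxs i
      have := hxs i
      simp [BoundedFormula.Realize] at this ⊢
      exact this
  | inf h1 h2 ih1 ih2 =>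
      intro xs hxs
      simp only [BoundedFormula.realize_inf] at hxs ⊢
      exact ⟨ih1 xs fun i => (hxs i).1, ih2 xs fun i => (hxs i).2⟩
  | ex h ih =>
      intro xs hxs
      simp only [BoundedFormula.realize_ex] at hxs ⊢
      choose f hf using fun i => hxs i
      refine ⟨f, ?_⟩
      have := ih (Fin.snoc xs f) (fun i => by rw [snoc_comp]; exact hf i)
      exact this
  | all h ih =>
      intro xs hxs
      simp only [BoundedFormula.realize_all] at hxs ⊢
      intro g
      exact ih (Fin.snoc xs g) (fun i => by rw [snoc_comp]; exact hxs i (g i))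


/-- Every positive Horn sentence true in `A` is true in the power structure `A^ι`
(for `ι` nonempty). -/
theorem stmt1 {L : FirstOrder.Language} [L.IsRelational]
    {A : Type*} [L.Structure A] (ι : Type*) [Nonempty ι]
    (φ : L.Sentence) (hφ : IsPH L φ) (hA : A ⊨ φ) :
    RealizeIn L (ι → A) (powStruct L ι A) φ := by
  have h := key (A := A) ι hφ (fun j => j.elim0) (fun i => by
    have := hA
    unfold Sentence.Realize Formula.Realize at this
    convert this using 2 <;> exact Subsingleton.elim _ _)
  unfold RealizeIn Sentence.Realize Formula.Realize
  convert h using 2 <;> exact Subsingleton.elim _ _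
end

section
/- In the language with one binary relation symbol E: every Π₂ positive Horn sentence true in the two-element structure ({0,1}; ≤) (E interpreted as {(0,0),(0,1),(1,1)}) is true in (ℚ; ≤), but the positive Horn sentence ∃x∀y E(x,y) is true in ({0,1}; ≤) and false in (ℚ; ≤). Hence Π₂ positive Horn containment does not imply full positive Horn containment when the right-hand structure is allowed to be infinite. -/
open FirstOrder Language

/-- Conjunctions of atomic formulas `R(v₁,…,vₙ)`. -/
inductive IsConjAtoms (L : FirstOrder.Language) : ∀ {n : ℕ}, L.BoundedFormula Empty n → Prop
  | rel {n l : ℕ} (R : L.Relations l) (v : Fin l → Fin n) :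
      IsConjAtoms L (BoundedFormula.rel R fun i => Term.var (Sum.inr (v i)))
  | inf {n : ℕ} {φ ψ : L.BoundedFormula Empty n} :
      IsConjAtoms L φ → IsConjAtoms L ψ → IsConjAtoms L (φ ⊓ ψ)

/-- Existentially quantified conjunctions of atoms: `∃y₁…∃yₙ P`. -/
inductive IsExConj (L : FirstOrder.Language) : ∀ {n : ℕ}, L.BoundedFormula Empty n → Prop
  | base {n : ℕ} {φ : L.BoundedFormula Empty n} : IsConjAtoms L φ → IsExConj L φ
  | ex {n : ℕ} {φ : L.BoundedFormula Empty (n + 1)} : IsExConj L φ → IsExConj L φ.ex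

/-- Π₂ positive Horn formulas: `∀x₁…∀xₘ ∃y₁…∃yₙ P` with `P` a conjunction of atoms. -/
inductive IsPi2PH (L : FirstOrder.Language) : ∀ {n : ℕ}, L.BoundedFormula Empty n → Prop
  | base {n : ℕ} {φ : L.BoundedFormula Empty n} : IsExConj L φ → IsPi2PH L φ
  | all {n : ℕ} {φ : L.BoundedFormula Empty (n + 1)} : IsPi2PH L φ → IsPi2PH L φ.all

/-- The relation symbols of the language with a single binary relation symbol `E`. -/
inductive EdgeSym : ℕ → Type
  | edge : EdgeSym 2

/-- The relational language with one binary relation symbol `E`. -/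
def Lgr : FirstOrder.Language := ⟨fun _ => Empty, EdgeSym⟩

/-- The `Lgr`-structure on `M` in which `E` is interpreted as the relation `r`. -/
def relStruct {M : Type*} (r : M → M → Prop) : Lgr.Structure M where
  funMap := fun f _ => Empty.elim f
  RelMap := fun R x =>
    match R, x with
    | EdgeSym.edge, x => r (x 0) (x 1)

/-- The sentence `∃x∀y E(x,y)`. -/
def exAllSentence : Lgr.Sentence :=
  BoundedFormula.ex (BoundedFormula.all
    (BoundedFormula.rel EdgeSym.edge
      ![Term.var (Sum.inr 0), Term.var (Sum.inr 1)]))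

def RR {M : Type} (r : M → M → Prop) {n : ℕ} (φ : Lgr.BoundedFormula Empty n)
    (xs : Fin n → M) : Prop :=
  @BoundedFormula.Realize Lgr M (relStruct r) Empty n φ (default : Empty → M) xs
lemma RR_inf {M : Type} (r : M → M → Prop) {n} (φ ψ : Lgr.BoundedFormula Empty n)
    (xs : Fin n → M) : RR r (φ ⊓ ψ) xs ↔ RR r φ xs ∧ RR r ψ xs :=
  @BoundedFormula.realize_inf Lgr M (relStruct r) Empty n φ ψ _ _
lemma RR_ex {M : Type} (r : M → M → Prop) {n} (φ : Lgr.BoundedFormula Empty (n+1))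
    (xs : Fin n → M) : RR r φ.ex xs ↔ ∃ a, RR r φ (Fin.snoc xs a) :=
  @BoundedFormula.realize_ex Lgr M (relStruct r) Empty n φ _ _
lemma RR_all {M : Type} (r : M → M → Prop) {n} (φ : Lgr.BoundedFormula Empty (n+1))
    (xs : Fin n → M) : RR r φ.all xs ↔ ∀ a, RR r φ (Fin.snoc xs a) :=
  @BoundedFormula.realize_all Lgr M (relStruct r) Empty n φ _ _
lemma RR_rel {M : Type} (r : M → M → Prop) {n} (v : Fin 2 → Fin n) (xs : Fin n → M) :
    RR r (BoundedFormula.rel EdgeSym.edge fun i => Term.var (Sum.inr (v i))) xs ↔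
      r (xs (v 0)) (xs (v 1)) := Iff.rfl

lemma conj_transfer {ι : Type} {n} {φ : Lgr.BoundedFormula Empty n}
    (hφ : IsConjAtoms Lgr φ) :
    ∀ (xs : Fin n → ℚ) (ys : ι → Fin n → Fin 2),
      (∀ j j' : Fin n, (∀ i, ys i j ≤ ys i j') → xs j ≤ xs j') →
      (∀ i, RR (fun a b : Fin 2 => a ≤ b) φ (ys i)) →
      RR (fun a b : ℚ => a ≤ b) φ xs := by
  induction hφ with
  | rel R v =>
    intro xs ys key hre
    cases R
    rw [RR_rel]
    exact key (v 0) (v 1) fun i => (RR_rel _ v (ys i)).1 (hre i)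
  | inf h1 h2 ih1 ih2 =>
    intro xs ys key hre
    rw [RR_inf]
    exact ⟨ih1 xs ys key fun i => ((RR_inf _ _ _ _).1 (hre i)).1,
           ih2 xs ys key fun i => ((RR_inf _ _ _ _).1 (hre i)).2⟩

lemma exconj_transfer {ι : Type} (h : (ι → Fin 2) → ℚ)
    (hmono : ∀ b b' : ι → Fin 2, (∀ i, b i ≤ b' i) → h b ≤ h b')
    {n} {φ : Lgr.BoundedFormula Empty n} (hφ : IsExConj Lgr φ) :
    ∀ (xs : Fin n → ℚ) (ys : ι → Fin n → Fin 2),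
      (∀ (j : Fin n) (b : ι → Fin 2), (∀ i, ys i j ≤ b i) → xs j ≤ h b) →
      (∀ (j : Fin n) (b : ι → Fin 2), (∀ i, b i ≤ ys i j) → h b ≤ xs j) →
      (∀ i, RR (fun a b : Fin 2 => a ≤ b) φ (ys i)) →
      RR (fun a b : ℚ => a ≤ b) φ xs := by
  induction hφ with
  | base hψ =>
    intro xs ys hC1 hC2 hre
    refine conj_transfer hψ xs ys (fun j j' hle => ?_) hre
    exact le_trans (hC1 j (fun i => ys i j') hle)
      (hC2 j' (fun i => ys i j') fun i => le_refl _)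
  | ex hφ ih =>
    intro xs ys hC1 hC2 hre
    choose b hb using fun i => (RR_ex _ _ (ys i)).1 (hre i)
    rw [RR_ex]
    refine ⟨h b, ih (Fin.snoc xs (h b)) (fun i => Fin.snoc (ys i) (b i)) ?_ ?_ hb⟩
    · intro j
      refine Fin.lastCases ?_ ?_ j
      · intro c hle
        simp only [Fin.snoc_last] at hle ⊢
        exact hmono b c hle
      · intro j c hle
        simp only [Fin.snoc_castSucc] at hle ⊢
        exact hC1 j c hle
    · intro j
      refine Fin.lastCases ?_ ?_ j
      · intro c hle
        simp only [Fin.snoc_last] at hle ⊢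
        exact hmono c b hle
      · intro j c hle
        simp only [Fin.snoc_castSucc] at hle ⊢
        exact hC2 j c hle

lemma exconj_base {n : ℕ} {φ : Lgr.BoundedFormula Empty n} (hψ : IsExConj Lgr φ)
    (hyp : ∀ ys : Fin n → Fin 2, RR (fun a b : Fin 2 => a ≤ b) φ ys)
    (xs : Fin n → ℚ) : RR (fun a b : ℚ => a ≤ b) φ xs := by
  classical
  set t : Fin (n+1) → ℚ := Fin.snoc xs 0 with ht
  have hTne : (Finset.univ.image t).Nonempty :=
    Finset.Nonempty.image Finset.univ_nonempty t
  set Mx : ℚ := (Finset.univ.image t).max' hTne with hMx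
  set h : (Fin (n+1) → Fin 2) → ℚ := fun c =>
    (insert Mx ((Finset.univ.filter fun i => c i = 0).image t)).min'
      (Finset.insert_nonempty _ _) with hh
  set ys : Fin (n+1) → Fin n → Fin 2 := fun i j => if xs j ≤ t i then 0 else 1 with hys
  have hzero : ∀ a : Fin 2, a ≤ 0 → a = 0 :=
    fun a ha => le_antisymm ha (Fin.zero_le _)
  have hysval : ∀ i j, ys i j = 0 ↔ xs j ≤ t i := by
    intro i j
    show (if xs j ≤ t i then (0:Fin 2) else 1) = 0 ↔ xs j ≤ t i
    split
    · simp_all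
    · simp_all
  have htj : ∀ j : Fin n, t j.castSucc = xs j := fun j => Fin.snoc_castSucc _ _ _
  refine exconj_transfer h ?_ hψ xs ys ?_ ?_ (fun i => hyp _)
  · -- hmono
    intro b b' hbb'
    refine Finset.min'_subset _ ?_
    refine Finset.insert_subset_insert _ (Finset.image_subset_image ?_)
    intro i hi
    simp only [Finset.mem_filter, Finset.mem_univ, true_and] at hi ⊢
    exact hzero (b i) (hi ▸ hbb' i)
  · -- C1
    intro j c hle
    refine Finset.le_min' _ _ _ ?_
    intro y hy
    rcases Finset.mem_insert.1 hy with rfl | hy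
    · refine Finset.le_max' _ _ ?_
      exact Finset.mem_image.2 ⟨j.castSucc, Finset.mem_univ _, htj j⟩
    · obtain ⟨i, hi, rfl⟩ := Finset.mem_image.1 hy
      simp only [Finset.mem_filter, Finset.mem_univ, true_and] at hi
      exact (hysval i j).1 (hzero (ys i j) (hi ▸ hle i))
  · -- C2
    intro j c hle
    refine Finset.min'_le _ _ ?_
    refine Finset.mem_insert_of_mem ?_
    refine Finset.mem_image.2 ⟨j.castSucc, ?_, htj j⟩
    simp only [Finset.mem_filter, Finset.mem_univ, true_and]
    have h0 : ys j.castSucc j = 0 := (hysval _ _).2 (le_of_eq (htj j).symm)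
    exact hzero (c j.castSucc) (h0 ▸ hle j.castSucc)

lemma pi2_transfer {n} {φ : Lgr.BoundedFormula Empty n} (hφ : IsPi2PH Lgr φ) :
    (∀ ys : Fin n → Fin 2, RR (fun a b : Fin 2 => a ≤ b) φ ys) →
    ∀ xs : Fin n → ℚ, RR (fun a b : ℚ => a ≤ b) φ xs := by
  induction hφ with
  | base hψ => exact fun hyp xs => exconj_base hψ hyp xs
  | all hφ ih =>
    intro hyp xs
    rw [RR_all]
    intro a
    refine ih (fun ys => ?_) (Fin.snoc xs a)
    have heq : Fin.snoc (fun j => ys j.castSucc) (ys (Fin.last _)) = ys :=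
      funext fun j => Fin.lastCases (by simp) (by simp) j
    have := (RR_all _ _ (fun j => ys j.castSucc)).1 (hyp fun j => ys j.castSucc) (ys (Fin.last _))
    rwa [heq] at this

lemma RR_rel2 {M : Type} (r : M → M → Prop) {n} (a b : Fin n) (xs : Fin n → M) :
    RR r (BoundedFormula.rel EdgeSym.edge
      ![Term.var (Sum.inr a), Term.var (Sum.inr b)]) xs ↔ r (xs a) (xs b) := Iff.rfl

lemma realizeIn_iff {M : Type} (r : M → M → Prop) (φ : Lgr.Sentence) :
    RealizeIn Lgr M (relStruct r) φ ↔ RR r φ (default : Fin 0 → M) := Iff.rfl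

/-- Every Π₂ positive Horn sentence true in `({0,1}; ≤)` is true in `(ℚ; ≤)`, yet the
positive Horn sentence `∃x∀y E(x,y)` is true in `({0,1}; ≤)` and false in `(ℚ; ≤)`:
Π₂ positive Horn containment does not imply positive Horn containment for infinite
right-hand structures. -/
theorem stmt6 :
    (∀ φ : Lgr.Sentence, IsPi2PH Lgr φ →
      RealizeIn Lgr (Fin 2) (relStruct fun a b : Fin 2 => a ≤ b) φ →
      RealizeIn Lgr ℚ (relStruct fun a b : ℚ => a ≤ b) φ) ∧
    IsPH Lgr exAllSentence ∧
    RealizeIn Lgr (Fin 2) (relStruct fun a b : Fin 2 => a ≤ b) exAllSentence ∧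
    ¬ RealizeIn Lgr ℚ (relStruct fun a b : ℚ => a ≤ b) exAllSentence := by
  classical
  refine ⟨?_, ?_, ?_, ?_⟩
  · intro φ hφ h2
    exact (realizeIn_iff _ _).2 (pi2_transfer hφ
      (fun ys => Subsingleton.elim _ ys ▸ (realizeIn_iff _ _).1 h2) _)
  · have hts : (![Term.var (Sum.inr 0), Term.var (Sum.inr 1)] :
        Fin 2 → Lgr.Term (Empty ⊕ Fin 2)) =
        fun i => Term.var (Sum.inr ((![0, 1] : Fin 2 → Fin 2) i)) := by
      funext i; fin_cases i <;> rfl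
    unfold exAllSentence
    exact IsPH.ex (IsPH.all (by rw [hts]; exact IsPH.rel (show Lgr.Relations 2 from EdgeSym.edge) ![0, 1]))
  · rw [realizeIn_iff]
    unfold exAllSentence
    rw [RR_ex]
    refine ⟨0, ?_⟩
    rw [RR_all]
    intro a
    refine (RR_rel2 _ 0 1 _).2 ?_
    simp [Fin.snoc]
  · intro hcon
    rw [realizeIn_iff] at hcon
    unfold exAllSentence at hcon
    rw [RR_ex] at hcon
    obtain ⟨a, ha⟩ := hcon
    rw [RR_all] at ha
    have := (RR_rel2 _ 0 1 _).1 (ha (a - 1))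
    simp [Fin.snoc] at this
    linarith
end

section
/- Every Π₂ positive Horn sentence in the language with one binary relation symbol E that is true in the structure with domain ℕ → Fin 2 and E interpreted as the pointwise order (E(f,g) iff f i ≤ g i for every i : ℕ) is true in (ℕ; ≤). -/
open FirstOrder Language

section Aux

open BoundedFormula

/-- Positive existential formulas transfer along relation-preserving maps. -/
lemma exConj_pres {M N : Type} (rM : M → M → Prop) (rN : N → N → Prop) (h : M → N)
    (hh : ∀ a b : M, rM a b → rN (h a) (h b)) :
    ∀ {n : ℕ} {φ : Lgr.BoundedFormula Empty n}, IsExConj Lgr φ →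
      ∀ (v : Empty → M) (w : Empty → N) (xs : Fin n → M),
      @BoundedFormula.Realize Lgr M (relStruct rM) Empty n φ v xs →
      @BoundedFormula.Realize Lgr N (relStruct rN) Empty n φ w (h ∘ xs) := by
  letI : Lgr.Structure M := relStruct rM
  letI : Lgr.Structure N := relStruct rN
  intro n φ hφ
  induction hφ with
  | base hc =>
    induction hc with
    | rel R vv =>
      cases R
      intro v w xs hx
      exact hh _ _ hx
    | inf h1 h2 ih1 ih2 =>
      intro v w xs hx
      rw [BoundedFormula.realize_inf] at hx ⊢
      exact ⟨ih1 v w xs hx.1, ih2 v w xs hx.2⟩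
  | ex hφ ih =>
    intro v w xs hx
    rw [BoundedFormula.realize_ex] at hx ⊢
    obtain ⟨a, ha⟩ := hx
    refine ⟨h a, ?_⟩
    have := ih v w (Fin.snoc xs a) ha
    rwa [Fin.comp_snoc] at this

/-- The chain embedding `ℕ → (ℕ → Fin 2)`. -/
def chainEmb (k : ℕ) : ℕ → Fin 2 := fun i => if i < k then 1 else 0

lemma chainEmb_mono {k l : ℕ} (hkl : k ≤ l) : ∀ i, chainEmb k i ≤ chainEmb l i := by
  intro i
  unfold chainEmb
  by_cases h : i < k
  · rw [if_pos h, if_pos (lt_of_lt_of_le h hkl)]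
  · rw [if_neg h]
    exact Fin.zero_le _

/-- The retraction: the least index `≤ M` where `f` is zero, else `M+1`. -/
noncomputable def chainRet (M : ℕ) (f : ℕ → Fin 2) : ℕ :=
  if h : ∃ i, i ≤ M ∧ f i = 0 then Nat.find h else M + 1

lemma chainRet_mono (M : ℕ) {f g : ℕ → Fin 2} (hfg : ∀ i, f i ≤ g i) :
    chainRet M f ≤ chainRet M g := by
  unfold chainRet
  by_cases hg : ∃ i, i ≤ M ∧ g i = 0
  · obtain ⟨hle, hg0⟩ := Nat.find_spec hg
    have hle' := hfg (Nat.find hg)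
    rw [hg0] at hle'
    have hf0 : f (Nat.find hg) = 0 := le_antisymm hle' (Fin.zero_le _)
    have hf : ∃ i, i ≤ M ∧ f i = 0 := ⟨Nat.find hg, hle, hf0⟩
    rw [dif_pos hg, dif_pos hf]
    exact Nat.find_le ⟨hle, hf0⟩
  · rw [dif_neg hg]
    by_cases hf : ∃ i, i ≤ M ∧ f i = 0
    · rw [dif_pos hf]
      exact le_trans (Nat.find_spec hf).1 (Nat.le_succ M)
    · rw [dif_neg hf]

lemma chainRet_chainEmb {M k : ℕ} (hk : k ≤ M) : chainRet M (chainEmb k) = k := by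
  have hex : ∃ i, i ≤ M ∧ chainEmb k i = 0 := ⟨k, hk, by simp [chainEmb]⟩
  rw [chainRet, dif_pos hex]
  rw [Nat.find_eq_iff]
  refine ⟨⟨hk, by simp [chainEmb]⟩, ?_⟩
  intro j hj hcon
  have : chainEmb k j = 1 := by simp [chainEmb, hj]
  rw [this] at hcon
  exact one_ne_zero hcon.2

/-- Transfer of Π₂ positive Horn formulas from the power to `ℕ`. -/
lemma pi2_trans :
    ∀ {n : ℕ} {φ : Lgr.BoundedFormula Empty n}, IsPi2PH Lgr φ →
      ∀ (v : Empty → (ℕ → Fin 2)) (w : Empty → ℕ),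
      (∀ xs : Fin n → (ℕ → Fin 2),
        @BoundedFormula.Realize Lgr (ℕ → Fin 2)
          (relStruct fun f g : ℕ → Fin 2 => ∀ i : ℕ, f i ≤ g i) Empty n φ v xs) →
      ∀ xs : Fin n → ℕ,
        @BoundedFormula.Realize Lgr ℕ (relStruct fun a b : ℕ => a ≤ b) Empty n φ w xs := by
  letI : Lgr.Structure (ℕ → Fin 2) := relStruct fun f g : ℕ → Fin 2 => ∀ i : ℕ, f i ≤ g i
  letI : Lgr.Structure ℕ := relStruct fun a b : ℕ => a ≤ b
  intro n φ hφ
  induction hφ with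
  | base hc =>
    intro v w hA xs
    set M : ℕ := Finset.univ.sup xs with hM
    have hbound : ∀ j, xs j ≤ M := fun j => Finset.le_sup (Finset.mem_univ j)
    have h1 := hA (chainEmb ∘ xs)
    have h2 := exConj_pres (fun f g : ℕ → Fin 2 => ∀ i : ℕ, f i ≤ g i)
      (fun a b : ℕ => a ≤ b) (chainRet M) (fun a b hab => chainRet_mono M hab)
      hc v w (chainEmb ∘ xs) h1
    have heq : (chainRet M) ∘ (chainEmb ∘ xs) = xs := by
      funext j
      exact chainRet_chainEmb (hbound j)
    rwa [heq] at h2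
  | all hφ ih =>
    intro v w hA xs
    rw [BoundedFormula.realize_all]
    intro a
    refine ih v w ?_ (Fin.snoc xs a)
    intro ys
    have := hA (Fin.init ys)
    rw [BoundedFormula.realize_all] at this
    have h2 := this (ys (Fin.last _))
    rwa [Fin.snoc_init_self] at h2

/-- Realization of a sentence is independent of the (empty) assignments. -/
lemma realize0_congr {M : Type} [Lgr.Structure M] (φ : Lgr.Sentence)
    (v v' : Empty → M) (xs xs' : Fin 0 → M) :
    BoundedFormula.Realize φ v xs → BoundedFormula.Realize φ v' xs' := by
  intro h
  have h1 : v = v' := funext fun e => e.elim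
  have h2 : xs = xs' := funext fun i => i.elim0
  rw [← h1, ← h2]
  exact h

end Aux

/-- Every Π₂ positive Horn sentence true in the ℕ-indexed power of the two-element
reflexive chain (domain `ℕ → Fin 2`, `E` the pointwise order) is true in `(ℕ; ≤)`. -/
theorem stmt9 (φ : Lgr.Sentence) (hφ : IsPi2PH Lgr φ)
    (hpow : RealizeIn Lgr (ℕ → Fin 2)
      (relStruct fun f g : ℕ → Fin 2 => ∀ i : ℕ, f i ≤ g i) φ) :
    RealizeIn Lgr ℕ (relStruct fun a b : ℕ => a ≤ b) φ := by
  letI : Lgr.Structure (ℕ → Fin 2) := relStruct fun f g : ℕ → Fin 2 => ∀ i : ℕ, f i ≤ g i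
  letI : Lgr.Structure ℕ := relStruct fun a b : ℕ => a ≤ b
  unfold RealizeIn Sentence.Realize Formula.Realize at hpow ⊢
  have hA : ∀ xs : Fin 0 → (ℕ → Fin 2),
      @BoundedFormula.Realize Lgr (ℕ → Fin 2)
        (relStruct fun f g : ℕ → Fin 2 => ∀ i : ℕ, f i ≤ g i) Empty 0 φ default xs := by
    intro xs
    exact realize0_congr φ _ _ _ _ hpow
  exact realize0_congr φ _ _ _ _ (pi2_trans hφ default default hA default)
end

section
/- Fix k ≥ 2 and r ≥ 0. There exists a surjective function f : (Fin r → Fin k) → Fin 2 such that (i) for all x, y : Fin r → Fin k, if y j = x j + 1 (addition modulo k in Fin k) for all j : Fin r then f y = f x, and (ii) for all x : Fin r → Fin k, if x j ≠ 0 for all j : Fin r then f x = 1, if and only if r ≥ k. -/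
/-- For `k ≥ 2`: there is a surjective homomorphism from the `r`-th power of the
directed `k`-cycle-with-`U = [k] \ {0}` to the structure `({0,1}; E = {(0,0),(1,1)},
U = {1})` — i.e. a surjective `f : (Fin r → Fin k) → Fin 2` constant along the
componentwise successor-mod-`k` map and sending tuples avoiding `0` to `1` — if and
only if `r ≥ k`. -/
theorem stmt11 (k r : ℕ) (hk : 2 ≤ k) [NeZero k] :
    (∃ f : (Fin r → Fin k) → Fin 2, Function.Surjective f ∧
      (∀ x y : Fin r → Fin k, (∀ j, y j = x j + 1) → f y = f x) ∧
      (∀ x : Fin r → Fin k, (∀ j, x j ≠ 0) → f x = 1)) ↔ k ≤ r := by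
  open Fin.NatCast in
  classical
  constructor
  · rintro ⟨f, hsurj, hshift, hU⟩
    by_contra hlt
    push_neg at hlt
    have key : ∀ (x : Fin r → Fin k) (n : ℕ),
        f (fun j => x j + (n : Fin k)) = f x := by
      intro x n
      induction n with
      | zero => simp
      | succ n ih =>
        have h2 : f (fun j => x j + ((n+1 : ℕ) : Fin k))
            = f (fun j => x j + (n : Fin k)) := by
          apply hshift
          intro j
          push_cast
          abel
        rw [h2, ih]
    obtain ⟨x, hx⟩ := hsurj 0
    set S : Finset (Fin k) := Finset.image (fun j => -(x j)) Finset.univ with hS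
    have hcard : S.card < Fintype.card (Fin k) := by
      calc S.card ≤ (Finset.univ : Finset (Fin r)).card := Finset.card_image_le
        _ = r := by simp
        _ < k := hlt
        _ = Fintype.card (Fin k) := by simp
    have hcompl : (Sᶜ).Nonempty := by
      rw [← Finset.card_pos, Finset.card_compl]
      omega
    obtain ⟨t, ht⟩ := hcompl
    rw [Finset.mem_compl] at ht
    have hgood : ∀ j, x j + t ≠ 0 := by
      intro j h
      apply ht
      rw [hS]
      simp only [Finset.mem_image, Finset.mem_univ, true_and]
      exact ⟨j, by rw [neg_eq_iff_add_eq_zero]; exact h⟩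
    have h1 : f (fun j => x j + t) = 1 := hU _ hgood
    have h0 : f (fun j => x j + t) = 0 := by
      have hkey := key x t.val
      rw [Fin.cast_val_eq_self] at hkey
      rw [hkey, hx]
    rw [h0] at h1
    exact absurd h1 (by decide)
  · intro hkr
    have hone : (1 : Fin k) ≠ 0 := by
      intro h
      have := congrArg Fin.val h
      rw [Fin.val_one', Fin.val_zero, Nat.mod_eq_of_lt (by omega : 1 < k)] at this
      exact one_ne_zero this
    set P : (Fin r → Fin k) → Prop :=
      fun z => ∃ t : Fin k, z = fun j : Fin r => ((j : ℕ) : Fin k) + t with hP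
    set f : (Fin r → Fin k) → Fin 2 := fun z => if P z then 0 else 1 with hf
    have hfP : ∀ z, P z → f z = 0 := fun z h => if_pos h
    have hfnP : ∀ z, ¬ P z → f z = 1 := fun z h => if_neg h
    refine ⟨f, ?_, ?_, ?_⟩
    · intro b
      fin_cases b
      · refine ⟨fun j : Fin r => ((j : ℕ) : Fin k), ?_⟩
        show f _ = 0
        exact hfP _ ⟨0, by funext j; simp⟩
      · refine ⟨fun _ => 1, ?_⟩
        show f _ = 1
        apply hfnP
        rintro ⟨t, ht⟩
        have h0 := congrFun ht ⟨0, by omega⟩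
        have h1 := congrFun ht ⟨1, by omega⟩
        simp only [] at h0 h1
        have e0 : ((((⟨0, by omega⟩ : Fin r) : ℕ)) : Fin k) = 0 := by norm_num
        have e1 : ((((⟨1, by omega⟩ : Fin r) : ℕ)) : Fin k) = 1 := by norm_num
        rw [e0, zero_add] at h0
        rw [e1] at h1
        -- h0 : 1 = t, h1 : 1 = 1 + t
        rw [← h0] at h1
        apply hone
        have h2 : (1 : Fin k) + 1 - 1 = 1 - 1 := by rw [← h1]
        simpa using h2
    · intro x y hxy
      by_cases h : P x
      · obtain ⟨t, htx⟩ := h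
        have hPy : P y := ⟨t + 1, by
          funext j
          rw [hxy j, congrFun htx j]
          abel⟩
        rw [hfP y hPy, hfP x ⟨t, htx⟩]
      · have hPy : ¬ P y := by
          rintro ⟨t, hty⟩
          apply h
          refine ⟨t - 1, ?_⟩
          funext j
          have h2 := congrFun hty j
          rw [hxy j] at h2
          have h3 : x j = ((j : ℕ) : Fin k) + t - 1 := eq_sub_of_add_eq h2
          rw [h3]; abel
        rw [hfnP y hPy, hfnP x h]
    · intro x hx
      apply hfnP
      rintro ⟨t, ht⟩
      have hpos : 0 < k := by omega
      have hj : (k - t.val) % k < r := lt_of_lt_of_le (Nat.mod_lt _ hpos) hkr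
      apply hx ⟨(k - t.val) % k, hj⟩
      rw [congrFun ht ⟨(k - t.val) % k, hj⟩]
      apply Fin.ext
      simp only [Fin.val_add, Fin.val_natCast, Fin.val_zero]
      have htv : t.val < k := t.isLt
      rw [Nat.mod_mod_of_dvd _ dvd_rfl, Nat.mod_add_mod, Nat.sub_add_cancel htv.le,
        Nat.mod_self]
end

section
/- There is no finite digraph F with the property that for every positive Horn sentence ψ in the language with one binary relation symbol E: F satisfies ψ if and only if ψ is true in every digraph satisfying ∀x∃y E(x,y). In other words, the sentence ∀x∃y E(x,y) admits no finite canonical model for positive Horn entailment. -/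
open FirstOrder Language

-- auxiliary

open Fin.NatCast

/-- atomic formula E(v_i, v_{i+1}) in context of m+1 variables -/
def atomF (m : ℕ) (i : Fin (m+1)) : Lgr.BoundedFormula Empty (m+1) :=
  BoundedFormula.rel EdgeSym.edge fun j => Term.var (Sum.inr (![i, i+1] j))

lemma isPH_atomF (m : ℕ) (i : Fin (m+1)) : IsPH Lgr (atomF m i) :=
  by unfold atomF; exact IsPH.rel (L := Lgr) EdgeSym.edge ![i, i+1]

lemma realize_atomF {M : Type} (r : M → M → Prop) (m : ℕ) (i : Fin (m+1))
    (v : Empty → M) (xs : Fin (m+1) → M) :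
    @BoundedFormula.Realize Lgr M (relStruct r) _ _ (atomF m i) v xs ↔ r (xs i) (xs (i+1)) :=
  Iff.rfl

/-- conjunction of atoms E(v_t, v_{t+1}) for t = 0..j -/
def cyc (m : ℕ) : ℕ → Lgr.BoundedFormula Empty (m+1)
  | 0 => atomF m 0
  | j+1 => cyc m j ⊓ atomF m (↑(j+1))

lemma isPH_cyc (m j : ℕ) : IsPH Lgr (cyc m j) := by
  induction j with
  | zero => exact isPH_atomF m 0
  | succ j ih => exact IsPH.inf ih (isPH_atomF m _)

lemma isPH_exs : ∀ {n : ℕ} (φ : Lgr.BoundedFormula Empty n), IsPH Lgr φ → IsPH Lgr φ.exs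
  | 0, φ, h => h
  | n+1, φ, h => isPH_exs φ.ex (IsPH.ex h)

lemma realize_cyc {M : Type} (r : M → M → Prop) (m j : ℕ)
    (v : Empty → M) (xs : Fin (m+1) → M) :
    @BoundedFormula.Realize Lgr M (relStruct r) _ _ (cyc m j) v xs ↔
      ∀ t : ℕ, t ≤ j → r (xs ↑t) (xs (↑t + 1)) := by
  letI : Lgr.Structure M := relStruct r
  induction j with
  | zero =>
    rw [cyc, realize_atomF]
    constructor
    · intro h t ht
      obtain rfl : t = 0 := Nat.le_zero.mp ht
      simpa using h
    · intro h; simpa using h 0 le_rfl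
  | succ j ih =>
    rw [cyc, BoundedFormula.realize_inf]
    simp only [ih, realize_atomF r m (↑(j+1)) v xs]
    constructor
    · rintro ⟨h1, h2⟩ t ht
      rcases Nat.lt_succ_iff_lt_or_eq.mp (Nat.lt_succ_of_le ht) with h | rfl
      · exact h1 t (Nat.lt_succ_iff.mp h)
      · exact h2
    · intro h
      exact ⟨fun t ht => h t (ht.trans (Nat.le_succ j)), h (j+1) le_rfl⟩

/-- the sentence ∀x∃y E(x,y) -/
def sigmaS : Lgr.Sentence :=
  ((BoundedFormula.rel EdgeSym.edge fun j => Term.var (Sum.inr (![0, 1] j))).ex).all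

lemma isPH_sigmaS : IsPH Lgr sigmaS :=
  IsPH.all (IsPH.ex (IsPH.rel (L := Lgr) EdgeSym.edge ![0, 1]))

lemma realize_sigmaS {M : Type} (r : M → M → Prop) :
    RealizeIn Lgr M (relStruct r) sigmaS ↔ ∀ x : M, ∃ y : M, r x y := by
  letI : Lgr.Structure M := relStruct r
  simp only [RealizeIn, sigmaS, Sentence.Realize, Formula.Realize,
    BoundedFormula.realize_all, BoundedFormula.realize_ex, BoundedFormula.realize_rel]
  constructor
  · intro h x
    obtain ⟨y, hy⟩ := h x
    exact ⟨y, hy⟩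
  · intro h x
    obtain ⟨y, hy⟩ := h x
    exact ⟨y, hy⟩

/-- the sentence ∃x∃y E(x,y) -/
def tauS : Lgr.Sentence :=
  ((BoundedFormula.rel EdgeSym.edge fun j => Term.var (Sum.inr (![0, 1] j))).ex).ex

lemma isPH_tauS : IsPH Lgr tauS :=
  IsPH.ex (IsPH.ex (IsPH.rel (L := Lgr) EdgeSym.edge ![0, 1]))

lemma realize_tauS {M : Type} (r : M → M → Prop) :
    RealizeIn Lgr M (relStruct r) tauS ↔ ∃ x y : M, r x y := by
  letI : Lgr.Structure M := relStruct r
  simp only [RealizeIn, tauS, Sentence.Realize, Formula.Realize,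
    BoundedFormula.realize_ex, BoundedFormula.realize_rel]
  constructor
  · rintro ⟨x, y, hy⟩
    exact ⟨x, y, hy⟩
  · rintro ⟨x, y, hy⟩
    exact ⟨x, y, hy⟩

/-- cycle sentence of length m+1 -/
def cycS (m : ℕ) : Lgr.Sentence := (cyc m m).exs

lemma isPH_cycS (m : ℕ) : IsPH Lgr (cycS m) := isPH_exs _ (isPH_cyc m m)

lemma realize_cycS {M : Type} (r : M → M → Prop) (m : ℕ) :
    RealizeIn Lgr M (relStruct r) (cycS m) ↔
      ∃ xs : Fin (m+1) → M, ∀ i : Fin (m+1), r (xs i) (xs (i+1)) := by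
  letI : Lgr.Structure M := relStruct r
  simp only [RealizeIn, cycS, Sentence.Realize, BoundedFormula.realize_exs]
  constructor
  · rintro ⟨xs, h⟩
    rw [realize_cyc r m m default xs] at h
    refine ⟨xs, fun i => ?_⟩
    have := h i.val (Nat.lt_succ_iff.mp i.isLt)
    simpa [Fin.cast_val_eq_self] using this
  · rintro ⟨xs, h⟩
    refine ⟨xs, ?_⟩
    rw [realize_cyc r m m default xs]
    intro t _
    exact h ↑t


/-- The sentence `∀x∃y E(x,y)` admits no finite canonical model for positive Horn
entailment: no finite digraph `F` satisfies precisely those positive Horn sentences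
that are true in every digraph satisfying `∀x∃y E(x,y)`. -/
theorem stmt17 :
    ¬ ∃ (F : Type) (_ : Fintype F) (EF : F → F → Prop),
      ∀ ψ : Lgr.Sentence, IsPH Lgr ψ →
        (RealizeIn Lgr F (relStruct EF) ψ ↔
          ∀ (D : Type) (ED : D → D → Prop), Nonempty D → (∀ x : D, ∃ y : D, ED x y) →
            RealizeIn Lgr D (relStruct ED) ψ) := by
  rintro ⟨F, hFin, EF, H⟩
  have hσ : ∀ x : F, ∃ y : F, EF x y := by
    refine (realize_sigmaS EF).mp ((H sigmaS isPH_sigmaS).mpr ?_)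
    intro D ED _ htot
    exact (realize_sigmaS ED).mpr htot
  have hτ : ∃ x y : F, EF x y := by
    refine (realize_tauS EF).mp ((H tauS isPH_tauS).mpr ?_)
    intro D ED hne htot
    obtain ⟨x⟩ := hne
    obtain ⟨y, hy⟩ := htot x
    exact (realize_tauS ED).mpr ⟨x, y, hy⟩
  obtain ⟨a, -, -⟩ := hτ
  choose f hf using hσ
  have key : ∃ i j : ℕ, i < j ∧ f^[i] a = f^[j] a := by
    obtain ⟨i, j, hne, hij⟩ := Finite.exists_ne_map_eq_of_infinite (fun n : ℕ => f^[n] a)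
    rcases hne.lt_or_gt with h | h
    · exact ⟨i, j, h, hij⟩
    · exact ⟨j, i, h, hij.symm⟩
  obtain ⟨i, j, hlt, hij⟩ := key
  set m : ℕ := j - i - 1 with hm
  have hj : j = i + m + 1 := by omega
  set xs : Fin (m+1) → F := fun t => f^[i + t.val] a with hxs
  have hstep : ∀ t : Fin (m+1), f (xs t) = xs (t+1) := by
    intro t
    by_cases h : t.val < m
    · have hval : ((t+1 : Fin (m+1))).val = t.val + 1 :=
        Fin.val_add_one_of_lt (by simpa [Fin.lt_iff_val_lt_val, Fin.val_last] using h)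
      simp only [hxs, hval, ← Nat.add_assoc]
      exact (Function.iterate_succ_apply' f _ a).symm
    · have hv : t.val = m := by omega
      have ht : t = Fin.last m := Fin.ext (by simpa [Fin.val_last] using hv)
      have hval : ((t+1 : Fin (m+1))).val = 0 := by
        rw [ht, Fin.last_add_one]; simp
      simp only [hxs, hval, Nat.add_zero, hv]
      calc f (f^[i + m] a) = f^[i + m + 1] a := (Function.iterate_succ_apply' f _ a).symm
        _ = f^[j] a := by rw [hj]
        _ = f^[i] a := hij.symm
  have hE : ∀ t : Fin (m+1), EF (xs t) (xs (t+1)) := fun t => hstep t ▸ hf (xs t)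
  have hFcyc : RealizeIn Lgr F (relStruct EF) (cycS m) := (realize_cycS EF m).mpr ⟨xs, hE⟩
  have hNcyc := (H (cycS m) (isPH_cycS m)).mp hFcyc ℕ (fun x y => y = x + 1)
    ⟨0⟩ (fun x => ⟨x + 1, rfl⟩)
  obtain ⟨ys, hy⟩ := (realize_cycS (fun x y : ℕ => y = x + 1) m).mp hNcyc
  have hsum : ∑ t : Fin (m+1), ys (t+1) = ∑ t : Fin (m+1), ys t :=
    Fintype.sum_equiv (Equiv.addRight 1) _ _ (fun t => rfl)
  have h2 : ∑ t : Fin (m+1), ys (t+1) = (∑ t : Fin (m+1), ys t) + (m+1) := by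
    simp only [fun t : Fin (m+1) => hy t]
    rw [Finset.sum_add_distrib]
    simp
  omega
end

section
/- Let H₂ be the irreflexive graph on vertex set {0,1,2,3} whose edges are exactly the pairs of distinct vertices other than {0,3} (i.e. K₄ minus one edge, with the edge relation symmetric), and let K₃ be the complete irreflexive graph on 3 vertices, both regarded as structures for the language with one binary relation symbol E. Then H₂ and K₃ satisfy exactly the same positive Horn sentences. -/
open FirstOrder Language

lemma snoc_pair {M N : Type*} {n : ℕ} (v1 : Fin n → M) (v2 : Fin n → N) (a : M) (b : N) :
    (fun i : Fin (n + 1) =>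
        ((Fin.snoc v1 a : Fin (n + 1) → M) i, (Fin.snoc v2 b : Fin (n + 1) → N) i)) =
      Fin.snoc (α := fun _ : Fin (n + 1) => M × N) (fun i => (v1 i, v2 i)) (a, b) := by
  funext i
  refine Fin.lastCases ?_ ?_ i <;> simp

/-- preservation under surjective homomorphisms -/
lemma surj_pres {M N : Type*} (r : M → M → Prop) (s : N → N → Prop) (h : M → N)
    (hsurj : Function.Surjective h) (hhom : ∀ a b, r a b → s (h a) (h b))
    {n : ℕ} {φ : Lgr.BoundedFormula Empty n} (hφ : IsPH Lgr φ) :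
    ∀ v : Fin n → M,
      @BoundedFormula.Realize Lgr M (relStruct r) Empty n φ default v →
      @BoundedFormula.Realize Lgr N (relStruct s) Empty n φ default (h ∘ v) := by
  letI SM : Lgr.Structure M := relStruct r
  letI SN : Lgr.Structure N := relStruct s
  induction hφ with
  | rel R w =>
      intro v hr
      cases R
      simp only [BoundedFormula.Realize, Term.realize, Sum.elim_inr, relStruct,
        Function.comp] at hr ⊢
      exact hhom _ _ hr
  | inf _ _ ih1 ih2 =>
      intro v hr
      rw [BoundedFormula.realize_inf] at hr ⊢
      exact ⟨ih1 v hr.1, ih2 v hr.2⟩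
  | ex _ ih =>
      intro v hr
      rw [BoundedFormula.realize_ex] at hr ⊢
      obtain ⟨a, ha⟩ := hr
      refine ⟨h a, ?_⟩
      have := ih (Fin.snoc v a) ha
      rwa [show h ∘ Fin.snoc v a = Fin.snoc (h ∘ v) (h a) from Fin.comp_snoc h v a] at this
  | all _ ih =>
      intro v hr
      rw [BoundedFormula.realize_all] at hr ⊢
      intro b
      obtain ⟨a, rfl⟩ := hsurj b
      have := ih (Fin.snoc v a) (hr a)
      rwa [show h ∘ Fin.snoc v a = Fin.snoc (h ∘ v) (h a) from Fin.comp_snoc h v a] at this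

/-- preservation under binary products -/
lemma prod_pres {M N : Type*} (r : M → M → Prop) (s : N → N → Prop)
    {n : ℕ} {φ : Lgr.BoundedFormula Empty n} (hφ : IsPH Lgr φ) :
    ∀ (v1 : Fin n → M) (v2 : Fin n → N),
      @BoundedFormula.Realize Lgr M (relStruct r) Empty n φ default v1 →
      @BoundedFormula.Realize Lgr N (relStruct s) Empty n φ default v2 →
      @BoundedFormula.Realize Lgr (M × N)
        (relStruct fun p q => r p.1 q.1 ∧ s p.2 q.2) Empty n φ default
        (fun i => (v1 i, v2 i)) := by
  letI SM : Lgr.Structure M := relStruct r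
  letI SN : Lgr.Structure N := relStruct s
  letI SP : Lgr.Structure (M × N) := relStruct fun p q => r p.1 q.1 ∧ s p.2 q.2
  induction hφ with
  | rel R w =>
      intro v1 v2 h1 h2
      cases R
      simp only [BoundedFormula.Realize, Term.realize, Sum.elim_inr, relStruct] at h1 h2 ⊢
      exact ⟨h1, h2⟩
  | inf _ _ ih1 ih2 =>
      intro v1 v2 h1 h2
      rw [BoundedFormula.realize_inf] at h1 h2 ⊢
      exact ⟨ih1 v1 v2 h1.1 h2.1, ih2 v1 v2 h1.2 h2.2⟩
  | ex _ ih =>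
      intro v1 v2 h1 h2
      rw [BoundedFormula.realize_ex] at h1 h2 ⊢
      obtain ⟨a, ha⟩ := h1
      obtain ⟨b, hb⟩ := h2
      refine ⟨(a, b), ?_⟩
      have := ih (Fin.snoc v1 a) (Fin.snoc v2 b) ha hb
      rwa [snoc_pair] at this
  | all _ ih =>
      intro v1 v2 h1 h2
      rw [BoundedFormula.realize_all] at h1 h2 ⊢
      rintro ⟨a, b⟩
      have := ih (Fin.snoc v1 a) (Fin.snoc v2 b) (h1 a) (h2 b)
      rwa [snoc_pair] at this

lemma surj_pres_sent {M N : Type*} (r : M → M → Prop) (s : N → N → Prop) (h : M → N)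
    (hsurj : Function.Surjective h) (hhom : ∀ a b, r a b → s (h a) (h b))
    {φ : Lgr.Sentence} (hφ : IsPH Lgr φ) :
    RealizeIn Lgr M (relStruct r) φ → RealizeIn Lgr N (relStruct s) φ := by
  intro hr
  have := surj_pres r s h hsurj hhom hφ default hr
  rwa [Subsingleton.elim (h ∘ (default : Fin 0 → M)) (default : Fin 0 → N)] at this

lemma prod_pres_sent {M N : Type*} (r : M → M → Prop) (s : N → N → Prop)
    {φ : Lgr.Sentence} (hφ : IsPH Lgr φ) :
    RealizeIn Lgr M (relStruct r) φ → RealizeIn Lgr N (relStruct s) φ →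
    RealizeIn Lgr (M × N) (relStruct fun p q => r p.1 q.1 ∧ s p.2 q.2) φ := by
  intro h1 h2
  have := prod_pres r s hφ default default h1 h2
  rwa [Subsingleton.elim (fun i : Fin 0 => ((default : Fin 0 → M) i, (default : Fin 0 → N) i))
    (default : Fin 0 → M × N)] at this


/-- The graph `H₂` (`K₄` minus the edge `{0,3}`, irreflexive and symmetric) and the
complete irreflexive graph `K₃` satisfy exactly the same positive Horn sentences. -/
theorem stmt19 (φ : Lgr.Sentence) (hφ : IsPH Lgr φ) :
    RealizeIn Lgr (Fin 4)
      (relStruct fun a b : Fin 4 => a ≠ b ∧ ¬(a = 0 ∧ b = 3) ∧ ¬(a = 3 ∧ b = 0)) φ ↔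
    RealizeIn Lgr (Fin 3) (relStruct fun a b : Fin 3 => a ≠ b) φ := by
  constructor
  · exact surj_pres_sent _ _ (![0, 1, 2, 0] : Fin 4 → Fin 3)
      (by decide) (by decide) hφ
  · intro h
    refine surj_pres_sent
      (fun p q : Fin 3 × Fin 3 => p.1 ≠ q.1 ∧ p.2 ≠ q.2)
      _ (fun p => if p.1 = 1 then 1 else if p.1 = 2 then 2 else if p.2 = 1 then 3 else 0)
      (by decide) (by decide) hφ ?_
    exact prod_pres_sent _ _ hφ h h
end
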